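/- Let V ⊆ B(H) ⊗ N be a quantum multi-relation on (M, N), with M and N minimally represented, let A_{P_V} : M ⊗ N → M ⊗ N be its quantum multi-adjacency operator and A_{S_V} : M → M its weighted adjacency operator. Regarding A_{P_V} as an element of B(L²(M) ⊗ L²(N)) and A_{S_V} as an element of B(L²(M)), one has (id ⊗ tr_{L²(N)})(A_{P_V}) = A_{S_V}, where tr_{L²(N)} is the trace on B(L²(N)). -/
import Mathlib


/-!
STATEMENT 15: Let `V ⊆ B(H) ⊗ N` be a quantum multi-relation on `(M, N)`, with `M` and
`N` minimally represented (realized here as the multimatrix algebras `M = ⊕_a B(ℂ^{da a})`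
acting block-diagonally on `H = ⊕_a ℂ^{da a}` and `N = ⊕_b B(ℂ^{db b})` on
`K = ⊕_b ℂ^{db b}`, which are exactly the minimal representations), let
`A_{P_V} : M ⊗ N → M ⊗ N` be its quantum multi-adjacency operator and
`A_{S_V} : M → M` its weighted adjacency operator.  Regarding `A_{P_V}` as an element
of `B(L²(M) ⊗ L²(N))` and `A_{S_V}` of `B(L²(M))` (matrices in the Hilbert–Schmidt
coordinates of `M` and `N`), one has `(id ⊗ tr_{L²(N)})(A_{P_V}) = A_{S_V}`, where
`id ⊗ tr_{L²(N)}` is the partial trace over the second tensor factor.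

The multi-edge indicator `P_V ∈ M ⊗ M^op ⊗ N ⊗ N^op` is hypothesized through its
characterizing property: it lies in (the 4-leg faithful representation of)
`M ⊗ M^op ⊗ N ⊗ N^op` and its Weaver action is the Hilbert–Schmidt-orthogonal
projection onto `V`.  The adjacency operators are extracted from `P_V` (and from
`S_V = (id⊗id⊗tr_K)((id⊗id⊗m)(P_V))`) by the entry formulas `APmat`, `ASmat`.
-/

open scoped Kronecker Matrix ComplexOrder

namespace Stmt15

abbrev PiMat (ι : Type) (d : ι → Type) [∀ i, Fintype (d i)] : Type _ :=
  ∀ i, Matrix (d i) (d i) ℂ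

variable {ιa ιb : Type} [Fintype ιa] [DecidableEq ιa] [Fintype ιb] [DecidableEq ιb]
  {da : ιa → Type} [∀ a, Fintype (da a)] [∀ a, DecidableEq (da a)]
  {db : ιb → Type} [∀ b, Fintype (db b)] [∀ b, DecidableEq (db b)]

/-- `B(H) ⊗ N ⊆ B(H ⊗ K)` for the block-diagonally represented `N`. -/
def BHN : Set (Matrix ((Σ a, da a) × Σ b, db b) ((Σ a, da a) × Σ b, db b) ℂ) :=
  ↑(Submodule.span ℂ
      {T | ∃ (A : Matrix (Σ a, da a) (Σ a, da a) ℂ) (y : PiMat ιb db),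
        T = A ⊗ₖ Matrix.blockDiagonal' y})

/-- Quantum multi-relation on `(M, N)` in the block-diagonal (minimal) realization:
subspace of `B(H) ⊗ N`, an `(M'⊗1)`-bimodule, invariant under `1 ⊗ Z(N)`
(`Z(N)` consists of the block-scalar matrices). -/
def IsQMR (V : Submodule ℂ (Matrix ((Σ a, da a) × Σ b, db b)
    ((Σ a, da a) × Σ b, db b) ℂ)) : Prop :=
  (∀ T ∈ V, T ∈ BHN (da := da) (db := db)) ∧
  (∀ A : Matrix (Σ a, da a) (Σ a, da a) ℂ,
    (∀ x : PiMat ιa da, A * Matrix.blockDiagonal' x = Matrix.blockDiagonal' x * A) →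
    ∀ T ∈ V, (A ⊗ₖ (1 : Matrix (Σ b, db b) (Σ b, db b) ℂ)) * T ∈ V ∧
      T * (A ⊗ₖ (1 : Matrix (Σ b, db b) (Σ b, db b) ℂ)) ∈ V) ∧
  (∀ c : ιb → ℂ, ∀ T ∈ V,
    ((1 : Matrix (Σ a, da a) (Σ a, da a) ℂ) ⊗ₖ
      Matrix.blockDiagonal' (fun b => c b • (1 : Matrix (db b) (db b) ℂ))) * T ∈ V)

/-- The 4-leg faithful representation of `M ⊗ M^op ⊗ N ⊗ N^op`. -/
def MMNN : Set (Matrix (((Σ a, da a) × Σ a, da a) × (Σ b, db b) × Σ b, db b)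
    (((Σ a, da a) × Σ a, da a) × (Σ b, db b) × Σ b, db b) ℂ) :=
  ↑(Submodule.span ℂ
      {X | ∃ m₁ m₂ : PiMat ιa da, ∃ n₁ n₂ : PiMat ιb db,
        X = (Matrix.blockDiagonal' m₁ ⊗ₖ (Matrix.blockDiagonal' m₂)ᵀ) ⊗ₖ
            (Matrix.blockDiagonal' n₁ ⊗ₖ (Matrix.blockDiagonal' n₂)ᵀ)})

/-- The Weaver action of the 4-leg tensor on `B(H ⊗ K)`. -/
noncomputable def weaver
    (P : Matrix (((Σ a, da a) × Σ a, da a) × (Σ b, db b) × Σ b, db b)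
      (((Σ a, da a) × Σ a, da a) × (Σ b, db b) × Σ b, db b) ℂ)
    (S : Matrix ((Σ a, da a) × Σ b, db b) ((Σ a, da a) × Σ b, db b) ℂ) :
    Matrix ((Σ a, da a) × Σ b, db b) ((Σ a, da a) × Σ b, db b) ℂ :=
  Matrix.of fun r c =>
    ∑ a : Σ a, da a, ∑ b : Σ a, da a, ∑ u : Σ b, db b, ∑ v : Σ b, db b,
      P ((r.1, c.1), (r.2, c.2)) ((a, b), (u, v)) * S (a, u) (b, v)

/-- Hilbert–Schmidt inner product. -/
noncomputable def hsInner {d : Type} [Fintype d] (A B : Matrix d d ℂ) : ℂ :=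
  (Aᴴ * B).trace

/-- `S_V = (id⊗id⊗tr_K)((id⊗id⊗m)(P_V))` extracted from the 4-leg tensor. -/
noncomputable def sVmat
    (P : Matrix (((Σ a, da a) × Σ a, da a) × (Σ b, db b) × Σ b, db b)
      (((Σ a, da a) × Σ a, da a) × (Σ b, db b) × Σ b, db b) ℂ) :
    Matrix ((Σ a, da a) × Σ a, da a) ((Σ a, da a) × Σ a, da a) ℂ :=
  Matrix.of fun r c => ∑ u : Σ b, db b, ∑ v : Σ b, db b, P (r, (u, u)) (c, (v, v))

/-- The matrix of the multi-adjacency operator `A_{P_V} : M ⊗ N → M ⊗ N`,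
`A_{P_V}(m ⊗ n) = (tr⊗id⊗tr⊗id)(P_V (m⊗1⊗n⊗1))`, in the Hilbert–Schmidt coordinates
of `L²(M) ⊗ L²(N)`. -/
noncomputable def APmat
    (P : Matrix (((Σ a, da a) × Σ a, da a) × (Σ b, db b) × Σ b, db b)
      (((Σ a, da a) × Σ a, da a) × (Σ b, db b) × Σ b, db b) ℂ) :
    Matrix ((Σ a, da a × da a) × Σ b, db b × db b)
      ((Σ a, da a × da a) × Σ b, db b × db b) ℂ :=
  Matrix.of fun r c =>
    P ((⟨c.1.1, c.1.2.2⟩, ⟨r.1.1, r.1.2.2⟩), (⟨c.2.1, c.2.2.2⟩, ⟨r.2.1, r.2.2.2⟩))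
      ((⟨c.1.1, c.1.2.1⟩, ⟨r.1.1, r.1.2.1⟩), (⟨c.2.1, c.2.2.1⟩, ⟨r.2.1, r.2.2.1⟩))

/-- The matrix of the weighted adjacency operator `A_{S}(m) = (tr⊗id)(S (m⊗1))` in the
Hilbert–Schmidt coordinates of `L²(M)`. -/
noncomputable def ASmat
    (S : Matrix ((Σ a, da a) × Σ a, da a) ((Σ a, da a) × Σ a, da a) ℂ) :
    Matrix (Σ a, da a × da a) (Σ a, da a × da a) ℂ :=
  Matrix.of fun r c =>
    S ((⟨c.1, c.2.2⟩ : Σ a, da a), (⟨r.1, r.2.2⟩ : Σ a, da a))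
      ((⟨c.1, c.2.1⟩ : Σ a, da a), (⟨r.1, r.2.1⟩ : Σ a, da a))

/-- Partial trace over the second tensor factor. -/
noncomputable def ptrSecond {I J : Type} [Fintype J]
    (X : Matrix (I × J) (I × J) ℂ) : Matrix I I ℂ :=
  Matrix.of fun i i' => ∑ j : J, X (i, j) (i', j)

set_option linter.unusedSectionVars false in
lemma offdiag_zero
    (P : Matrix (((Σ a, da a) × Σ a, da a) × (Σ b, db b) × Σ b, db b)
      (((Σ a, da a) × Σ a, da a) × (Σ b, db b) × Σ b, db b) ℂ)
    (hP₁ : P ∈ MMNN (da := da) (db := db)) :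
    ∀ (r c : (Σ a, da a) × Σ a, da a) (u v : Σ b, db b), u.1 ≠ v.1 →
      P (r, (u, u)) (c, (v, v)) = 0 := by
  have hP : P ∈ Submodule.span ℂ
      {X : Matrix (((Σ a, da a) × Σ a, da a) × (Σ b, db b) × Σ b, db b)
        (((Σ a, da a) × Σ a, da a) × (Σ b, db b) × Σ b, db b) ℂ |
        ∃ m₁ m₂ : PiMat ιa da, ∃ n₁ n₂ : PiMat ιb db,
          X = (Matrix.blockDiagonal' m₁ ⊗ₖ (Matrix.blockDiagonal' m₂)ᵀ) ⊗ₖ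
            (Matrix.blockDiagonal' n₁ ⊗ₖ (Matrix.blockDiagonal' n₂)ᵀ)} := hP₁
  clear hP₁
  induction hP using Submodule.span_induction with
  | mem X hX =>
    obtain ⟨m₁, m₂, n₁, n₂, rfl⟩ := hX
    intro r c u v h
    simp only [Matrix.kroneckerMap_apply]
    have : Matrix.blockDiagonal' n₁ u v = 0 := by
      obtain ⟨b, x⟩ := u; obtain ⟨b', y⟩ := v
      exact Matrix.blockDiagonal'_apply_ne n₁ x y h
    rw [this]; ring
  | zero => intro r c u v h; rfl
  | add X Y _ _ hX hY =>
    intro r c u v h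
    simp only [Matrix.add_apply, hX r c u v h, hY r c u v h, add_zero]
  | smul a X _ hX =>
    intro r c u v h
    simp only [Matrix.smul_apply, hX r c u v h, smul_zero]

theorem stmt15
    (V : Submodule ℂ (Matrix ((Σ a, da a) × Σ b, db b) ((Σ a, da a) × Σ b, db b) ℂ))
    (hV : IsQMR V)
    (P : Matrix (((Σ a, da a) × Σ a, da a) × (Σ b, db b) × Σ b, db b)
      (((Σ a, da a) × Σ a, da a) × (Σ b, db b) × Σ b, db b) ℂ)
    (hP₁ : P ∈ MMNN (da := da) (db := db))
    (hP₂ : ∀ S, weaver P S ∈ V ∧ ∀ T ∈ V, hsInner (S - weaver P S) T = 0) :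
    ptrSecond (APmat P) = ASmat (sVmat P) := by
  have key := offdiag_zero (da := da) (db := db) P hP₁
  ext r c
  simp only [ptrSecond, ASmat, sVmat, APmat, Matrix.of_apply]
  rw [← Finset.univ_sigma_univ, Finset.sum_sigma]
  simp only [Fintype.sum_prod_type]
  conv_rhs => rw [← Finset.univ_sigma_univ, Finset.sum_sigma]
  refine Finset.sum_congr rfl fun b _ => ?_
  rw [Finset.sum_comm]
  refine Finset.sum_congr rfl fun y _ => ?_
  rw [Finset.sum_sigma]
  rw [Finset.sum_eq_single_of_mem b (Finset.mem_univ b)]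
  intro b' _ hb'
  exact Finset.sum_eq_zero fun x _ =>
    key _ _ ⟨b, y⟩ ⟨b', x⟩ (by simpa using hb'.symm)

end Stmt15
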